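/- Let G be a finite group and χ a complex irreducible character of G. Then m_χ = Σ_{a∈G} Σ_{b∈G} |C_G(ab)b ∩ C_G(a)| · χ([a,b]) is a real number, i.e. conj(m_χ) = m_χ. -/

import Mathlib

open Polynomial Matrix

/-- Sum of inverses of roots in terms of the derivative at 0. -/
private lemma multiset_inv_sum (s : Multiset ℂ) (hs : (0:ℂ) ∉ s) :
    (s.map (fun a => a⁻¹)).sum * Polynomial.eval 0 ((s.map (fun a => X - C a)).prod)
      = - Polynomial.eval 0 (Polynomial.derivative ((s.map (fun a => X - C a)).prod)) := by
  induction s using Multiset.induction with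
  | empty => simp
  | cons a t ih =>
    have ha : a ≠ 0 := fun h => hs (h ▸ Multiset.mem_cons_self a t)
    have ht : (0:ℂ) ∉ t := fun h => hs (Multiset.mem_cons_of_mem h)
    have ih' := ih ht
    simp only [Multiset.map_cons, Multiset.sum_cons, Multiset.prod_cons, derivative_mul,
      eval_mul, eval_add, eval_sub, eval_X, eval_C, derivative_sub, derivative_X, derivative_C,
      eval_one, sub_zero, zero_sub, one_mul]
    have hinv : a * a⁻¹ = 1 := mul_inv_cancel₀ ha
    linear_combination (-a) * ih' - Polynomial.eval 0 ((t.map (fun a => X - C a)).prod) * hinv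

/-- Roots of the characteristic polynomial of a matrix of finite order are roots of unity. -/
private lemma root_pow_eq_one {d N : ℕ} (M : Matrix (Fin d) (Fin d) ℂ)
    (hM : M ^ N = 1) {lam : ℂ} (hl : lam ∈ M.charpoly.roots) : lam ^ N = 1 := by
  have hroot : (M.charpoly).IsRoot lam := (Polynomial.mem_roots (M.charpoly_monic.ne_zero)).1 hl
  have heval : Polynomial.eval lam M.charpoly = (lam • (1 : Matrix (Fin d) (Fin d) ℂ) - M).det := by
    rw [Matrix.charpoly, ← Polynomial.coe_evalRingHom, RingHom.map_det]
    congr 1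
    ext i j
    simp [Matrix.charmatrix, Matrix.one_apply, Matrix.diagonal_apply, Matrix.smul_apply,
      apply_ite (Polynomial.eval lam)]
  have hdet : (lam • (1 : Matrix (Fin d) (Fin d) ℂ) - M).det = 0 := by
    rw [← heval]; exact hroot
  obtain ⟨v, hv0, hv⟩ := (Matrix.exists_mulVec_eq_zero_iff).2 hdet
  have hMv : M.mulVec v = lam • v := by
    have := hv
    rw [Matrix.sub_mulVec, sub_eq_zero] at this
    rw [← this, Matrix.smul_mulVec, Matrix.one_mulVec]
  have hpow : ∀ k : ℕ, (M ^ k).mulVec v = lam ^ k • v := by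
    intro k
    induction k with
    | zero => simp [Matrix.one_mulVec]
    | succ k ih =>
      rw [pow_succ, ← Matrix.mulVec_mulVec, hMv, Matrix.mulVec_smul, ih, smul_smul, pow_succ]
      ring_nf
  have hNv := hpow N
  rw [hM, Matrix.one_mulVec] at hNv
  have hz : (lam ^ N - 1) • v = 0 := by rw [sub_smul, one_smul, ← hNv, sub_self]
  rcases smul_eq_zero.1 hz with h | h
  · exact sub_eq_zero.1 h
  · exact absurd h hv0

/-- The conjugate of the trace of a matrix of finite order is the trace of its inverse. -/
private lemma conj_trace_eq_trace_inv {d N : ℕ} (hN : N ≠ 0) (M : Matrix (Fin d) (Fin d) ℂ)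
    (hM : M ^ N = 1) : (starRingEnd ℂ) M.trace = (M⁻¹).trace := by
  have hdet : M.det ^ N = 1 := by rw [← Matrix.det_pow, hM, Matrix.det_one]
  have hdet0 : M.det ≠ 0 := fun h => by simp [h, zero_pow hN] at hdet
  set p := M.charpoly with hp
  have hmonic := M.charpoly_monic
  have hsplits : p.Splits := IsAlgClosed.splits p
  set s := p.roots with hs
  have hprod : p = (s.map (fun a => X - C a)).prod :=
    (hsplits.eq_prod_roots_of_monic hmonic)
  have h0s : (0:ℂ) ∉ s := by
    intro h0
    have := root_pow_eq_one M hM h0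
    simp [zero_pow hN] at this
  have htrace : M.trace = s.sum := M.trace_eq_sum_roots_charpoly
  have hconj : (starRingEnd ℂ) M.trace = (s.map (fun a => a⁻¹)).sum := by
    rw [htrace, map_multiset_sum]
    apply congrArg
    apply Multiset.map_congr rfl
    intro lam hlam
    have h1 : lam ^ N = 1 := root_pow_eq_one M hM hlam
    have habs : ‖lam‖ = 1 := by
      have hN' : ‖lam‖ ^ N = 1 := by
        rw [← norm_pow, h1, norm_one]
      have h0 : 0 ≤ ‖lam‖ := norm_nonneg _
      rcases lt_trichotomy ‖lam‖ 1 with h | h | h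
      · exact absurd hN' (by have := pow_lt_one₀ h0 h hN; exact ne_of_lt this)
      · exact h
      · exact absurd hN' (by have := one_lt_pow₀ h hN; exact (ne_of_gt this))
    show (starRingEnd ℂ) lam = lam⁻¹
    rw [Complex.inv_def, Complex.normSq_eq_norm_sq, habs]
    simp
  have hU : IsUnit M.det := Ne.isUnit hdet0
  have hMinv : M * M⁻¹ = 1 := Matrix.mul_nonsing_inv M hU
  have hmapmul : (M.map (C : ℂ → ℂ[X])) * ((M⁻¹).map (C : ℂ → ℂ[X])) = 1 := by
    rw [← Matrix.map_mul (f := (C : ℂ →+* ℂ[X])), hMinv]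
    exact Matrix.map_one _ (map_zero _) (map_one _)
  have hdetmap : ((C : ℂ →+* ℂ[X])) M.det = (M.map (C : ℂ → ℂ[X])).det :=
    RingHom.map_det _ M
  have key : C M.det * (M⁻¹).charpolyRev = (-1)^d * p := by
    rw [Matrix.charpolyRev, hdetmap, ← Matrix.det_mul, mul_sub, mul_one, Matrix.mul_smul,
      hmapmul]
    have hneg : M.map (C : ℂ → ℂ[X]) - (X : ℂ[X]) • (1 : Matrix (Fin d) (Fin d) ℂ[X])
        = -(charmatrix M) := by
      rw [charmatrix]
      rw [Matrix.smul_one_eq_diagonal]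
      rw [Matrix.scalar_apply]
      simp only [RingHom.mapMatrix_apply]
      abel
    rw [hneg, Matrix.det_neg, hp, Matrix.charpoly]
    simp [Fintype.card_fin]
  have e2 := congrArg (fun q => Polynomial.coeff q 1) key
  have hC : C ((-1:ℂ)^d) = ((-1 : ℂ[X]))^d := by
    rw [map_pow, map_neg, _root_.map_one]
  simp only [← hC, Polynomial.coeff_C_mul, Matrix.coeff_charpolyRev_eq_neg_trace] at e2
  have hD : p.coeff 1 = Polynomial.eval 0 (Polynomial.derivative p) := by
    rw [← Polynomial.coeff_zero_eq_eval_zero, Polynomial.coeff_derivative]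
    push_cast
    ring
  have e3 : M.det = (-1:ℂ)^d * Polynomial.eval 0 p := by
    rw [Matrix.det_eq_sign_charpoly_coeff, Polynomial.coeff_zero_eq_eval_zero]
    simp [Fintype.card_fin, hp]
  have hP0 : Polynomial.eval 0 p ≠ 0 := by
    intro h
    apply hdet0
    rw [e3, h, mul_zero]
  have e1 : (s.map (fun a => a⁻¹)).sum * Polynomial.eval 0 p
      = - Polynomial.eval 0 (Polynomial.derivative p) := by
    rw [hprod] at *
    exact multiset_inv_sum s h0s
  have hsq : ((-1:ℂ))^d * ((-1:ℂ))^d = 1 := by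
    rw [← pow_add, ← two_mul, pow_mul]
    norm_num
  rw [hconj]
  have h := e2
  simp only [hD, e3] at h
  have hne : ((-1:ℂ))^d ≠ 0 := pow_ne_zero _ (by norm_num)
  have h2 : Polynomial.eval 0 p * -((M⁻¹).trace)
      = Polynomial.eval 0 (Polynomial.derivative p) := by
    apply mul_left_cancel₀ hne
    linear_combination h
  apply mul_right_cancel₀ hP0
  rw [e1]
  linear_combination h2

/-- Complex conjugation of a character value. -/
private lemma conj_char {G : Type} [Group G] [Fintype G] (V : FDRep ℂ G) (g : G) :
    (starRingEnd ℂ) (V.character g) = V.character g⁻¹ := by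
  classical
  set b := Module.finBasis ℂ V with hb
  set M := LinearMap.toMatrix b b (V.ρ g) with hM
  set M' := LinearMap.toMatrix b b (V.ρ g⁻¹) with hM'
  have htr : V.character g = M.trace := by
    rw [FDRep.character, LinearMap.trace_eq_matrix_trace ℂ b]
  have htr' : V.character g⁻¹ = M'.trace := by
    rw [FDRep.character, LinearMap.trace_eq_matrix_trace ℂ b]
  have hmul : M * M' = 1 := by
    rw [hM, hM', ← LinearMap.toMatrix_comp b b b, ← Module.End.mul_eq_comp, ← _root_.map_mul,
      mul_inv_cancel, _root_.map_one, LinearMap.toMatrix_one]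
  have hpow : M ^ Fintype.card G = 1 := by
    have h1 : (V.ρ g) ^ Fintype.card G = 1 := by
      rw [← map_pow, pow_card_eq_one, _root_.map_one]
    calc M ^ Fintype.card G
        = LinearMap.toMatrix b b ((V.ρ g) ^ Fintype.card G) := by
          rw [hM]
          induction (Fintype.card G) with
          | zero => simp [LinearMap.toMatrix_one]
          | succ k ih => rw [pow_succ, pow_succ, ih, ← LinearMap.toMatrix_mul]
      _ = 1 := by rw [h1, LinearMap.toMatrix_one]
  have hinv : M⁻¹ = M' := Matrix.inv_eq_right_inv hmul
  rw [htr, htr', ← hinv]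
  exact conj_trace_eq_trace_inv Fintype.card_ne_zero M hpow

/-- The group-theoretic heart: under the two centralizer conditions, the commutator of the
transformed pair is the inverse of the original commutator. -/
private lemma comm_swap {G : Type} [Group G] (a b x : G)
    (h1 : (x * b⁻¹) * (a * b) = (a * b) * (x * b⁻¹)) (h2 : x * a = a * x) :
    (x * b⁻¹)⁻¹ * b⁻¹ * (x * b⁻¹) * b = (a⁻¹ * b⁻¹ * a * b)⁻¹ := by
  calc (x * b⁻¹)⁻¹ * b⁻¹ * (x * b⁻¹) * b
      = ((a * b) * (x * b⁻¹))⁻¹ * (a * x) := by group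
    _ = ((x * b⁻¹) * (a * b))⁻¹ * (x * a) := by rw [← h1, ← h2]
    _ = (a⁻¹ * b⁻¹ * a * b)⁻¹ := by group

/-- `|C_G(ab)b ∩ C_G(a)|`, where `C_G(x)` is the centralizer of `x`. -/
noncomputable def centInt {G : Type} [Group G] (a b : G) : ℕ :=
  Nat.card {x : G | x * b⁻¹ ∈ Subgroup.centralizer ({a * b} : Set G) ∧
    x ∈ Subgroup.centralizer ({a} : Set G)}

theorem stmt7 {G : Type} [Group G] [Fintype G]
    (V : FDRep ℂ G) (hV : CategoryTheory.Simple V) :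
    (starRingEnd ℂ)
        (∑ a : G, ∑ b : G, (centInt a b : ℂ) * V.character (a⁻¹ * b⁻¹ * a * b))
      = ∑ a : G, ∑ b : G, (centInt a b : ℂ) * V.character (a⁻¹ * b⁻¹ * a * b) := by
  classical
  set χ := V.character with hχ
  set P : G → G → G → Prop := fun a b x =>
    x * b⁻¹ ∈ Subgroup.centralizer ({a * b} : Set G) ∧
      x ∈ Subgroup.centralizer ({a} : Set G) with hP
  have hcard : ∀ a b : G, (centInt a b : ℕ) = (Finset.univ.filter (fun x => P a b x)).card := by
    intro a b
    rw [centInt, Nat.card_coe_set_eq, Set.ncard_eq_toFinset_card', Set.toFinset_setOf]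
  have hexpand : ∀ (c : G → G → ℂ), (∑ a : G, ∑ b : G, (centInt a b : ℂ) * c a b)
      = ∑ t : G × G × G, if P t.1 t.2.1 t.2.2 then c t.1 t.2.1 else 0 := by
    intro c
    rw [Fintype.sum_prod_type]
    apply Finset.sum_congr rfl
    intro a _
    rw [Fintype.sum_prod_type]
    apply Finset.sum_congr rfl
    intro b _
    have hrhs : (∑ x : G, if P a b x then c a b else 0)
        = ((Finset.univ.filter (fun x => P a b x)).card : ℂ) * c a b := by
      rw [Finset.sum_ite, Finset.sum_const, Finset.sum_const_zero, add_zero, nsmul_eq_mul]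
    rw [hcard a b]
    exact hrhs.symm
  -- the involution on triples
  set e : G × G × G ≃ G × G × G :=
    Function.Involutive.toPerm
      (fun t => (t.2.2 * t.2.1⁻¹, t.2.1, t.1 * t.2.1))
      (by intro t; simp) with he
  have hswap : ∀ t : G × G × G,
      (if P (e t).1 (e t).2.1 (e t).2.2 then χ ((e t).1⁻¹ * (e t).2.1⁻¹ * (e t).1 * (e t).2.1) else 0)
        = if P t.1 t.2.1 t.2.2 then χ ((t.1⁻¹ * t.2.1⁻¹ * t.1 * t.2.1)⁻¹) else 0 := by
    rintro ⟨a, b, x⟩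
    have heq : e (a, b, x) = (x * b⁻¹, b, a * b) := rfl
    rw [heq]
    have hPiff : P (x * b⁻¹) b (a * b) ↔ P a b x := by
      simp only [hP, Subgroup.mem_centralizer_iff, Set.mem_singleton_iff, forall_eq,
        mul_inv_cancel_right, inv_mul_cancel_right]
      constructor
      · rintro ⟨hxa, hab⟩
        exact ⟨hab.symm, hxa.symm⟩
      · rintro ⟨hab, hxa⟩
        exact ⟨hxa.symm, hab.symm⟩
    by_cases h : P a b x
    · rw [if_pos (hPiff.2 h), if_pos h]
      have h1 : (x * b⁻¹) * (a * b) = (a * b) * (x * b⁻¹) :=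
        ((Subgroup.mem_centralizer_iff.1 h.1) (a * b) rfl).symm
      have h2 : x * a = a * x :=
        ((Subgroup.mem_centralizer_iff.1 h.2) a rfl).symm
      exact congrArg χ (comm_swap a b x h1 h2)
    · rw [if_neg (fun hh => h (hPiff.1 hh)), if_neg h]
  calc (starRingEnd ℂ) (∑ a : G, ∑ b : G, (centInt a b : ℂ) * χ (a⁻¹ * b⁻¹ * a * b))
      = ∑ a : G, ∑ b : G, (centInt a b : ℂ) * χ ((a⁻¹ * b⁻¹ * a * b)⁻¹) := by
        rw [map_sum]
        apply Finset.sum_congr rfl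
        intro a _
        rw [map_sum]
        apply Finset.sum_congr rfl
        intro b _
        rw [hχ, _root_.map_mul, map_natCast, conj_char]
    _ = ∑ t : G × G × G, if P t.1 t.2.1 t.2.2
          then χ ((t.1⁻¹ * t.2.1⁻¹ * t.1 * t.2.1)⁻¹) else 0 :=
        hexpand (fun a b => χ ((a⁻¹ * b⁻¹ * a * b)⁻¹))
    _ = ∑ t : G × G × G, if P t.1 t.2.1 t.2.2
          then χ (t.1⁻¹ * t.2.1⁻¹ * t.1 * t.2.1) else 0 :=
        Fintype.sum_equiv e _ _ (fun t => (hswap t).symm)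
    _ = ∑ a : G, ∑ b : G, (centInt a b : ℂ) * χ (a⁻¹ * b⁻¹ * a * b) :=
        (hexpand (fun a b => χ (a⁻¹ * b⁻¹ * a * b))).symm
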